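/- For submodules A and B of a left R-module M, the following are equivalent: (1) there are no nonzero isomorphic submodules X ⊆ A and Y ⊆ B (A and B are strongly disjoint); (2) for all nonzero a ∈ A and b ∈ B, the annihilators Ann(a) and Ann(b) are distinct; (3) A ∩ B = 0 and every nonzero submodule U of A + B satisfies U ∩ A ≠ 0 or U ∩ B ≠ 0. -/
import Mathlib


variable {R : Type*} [Ring R] {M : Type*} [AddCommGroup M] [Module R M]

/-- `N` is an essential submodule of `M`: it intersects every nonzero submodule nontrivially. -/
def IsEssentialSubmodule (N : Submodule R M) : Prop :=
  ∀ B : Submodule R M, B ≠ ⊥ → N ⊓ B ≠ ⊥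

/-- A vertex of the sum-essential graph `S(M)`: a nontrivial submodule. -/
def IsVertexS (N : Submodule R M) : Prop := N ≠ ⊥ ∧ N ≠ ⊤

/-- Adjacency in the sum-essential graph `S(M)`. -/
def AdjS (A B : Submodule R M) : Prop :=
  IsVertexS A ∧ IsVertexS B ∧ A ≠ B ∧ IsEssentialSubmodule (A ⊔ B)

/-- A vertex of the proper sum-essential graph `N(M)`: a nontrivial non-essential submodule. -/
def IsVertexP (N : Submodule R M) : Prop :=
  N ≠ ⊥ ∧ N ≠ ⊤ ∧ ¬ IsEssentialSubmodule N

/-- Adjacency in the proper sum-essential graph `N(M)`. -/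
def AdjP (A B : Submodule R M) : Prop :=
  IsVertexP A ∧ IsVertexP B ∧ A ≠ B ∧ IsEssentialSubmodule (A ⊔ B)

/-- `U` is a uniform submodule: nonzero, and any two nonzero submodules of it intersect. -/
def UniformSubmodule (U : Submodule R M) : Prop :=
  U ≠ ⊥ ∧ ∀ A B : Submodule R M, A ≤ U → B ≤ U → A ≠ ⊥ → B ≠ ⊥ → A ⊓ B ≠ ⊥

/-- `C` is a complement of `U` in `M`: maximal with respect to `U ⊓ C = ⊥`. -/
def IsComplementOf (C U : Submodule R M) : Prop :=
  U ⊓ C = ⊥ ∧ ∀ D : Submodule R M, U ⊓ D = ⊥ → C ≤ D → D = C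

lemma span_equiv_of_ann_eq (a b : M) (h : {r : R | r • a = 0} = {r : R | r • b = 0}) :
    Nonempty (↥(Submodule.span R {a}) ≃ₗ[R] ↥(Submodule.span R {b})) := by
  have hk : LinearMap.ker (LinearMap.toSpanSingleton R M a)
      = LinearMap.ker (LinearMap.toSpanSingleton R M b) := by
    ext r
    have := Set.ext_iff.mp h r
    simpa [LinearMap.mem_ker, LinearMap.toSpanSingleton_apply] using this
  exact ⟨(LinearEquiv.ofEq _ _ (LinearMap.span_singleton_eq_range R M a)).trans
    ((((LinearMap.quotKerEquivRange (LinearMap.toSpanSingleton R M a)).symm.trans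
      ((Submodule.quotEquivOfEq _ _ hk).trans
        (LinearMap.quotKerEquivRange (LinearMap.toSpanSingleton R M b)))).trans
      (LinearEquiv.ofEq _ _ (LinearMap.span_singleton_eq_range R M b).symm)))⟩

/-- TFAE for submodules `A, B`: (1) `A` and `B` are strongly disjoint
(no nonzero isomorphic submodules `X ⊆ A`, `Y ⊆ B`); (2) any nonzero `a ∈ A` and
`b ∈ B` have distinct annihilators; (3) `A ∩ B = 0` and every nonzero submodule `U`
of `A + B` meets `A` or `B` nontrivially. -/
theorem stmt19 (A B : Submodule R M) :
    List.TFAE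
      [¬ ∃ X Y : Submodule R M, X ≤ A ∧ Y ≤ B ∧ X ≠ ⊥ ∧ Y ≠ ⊥ ∧
          Nonempty (↥X ≃ₗ[R] ↥Y),
       ∀ a ∈ A, a ≠ 0 → ∀ b ∈ B, b ≠ 0 →
          {r : R | r • a = 0} ≠ {r : R | r • b = 0},
       A ⊓ B = ⊥ ∧ ∀ U : Submodule R M, U ≤ A ⊔ B → U ≠ ⊥ →
          U ⊓ A ≠ ⊥ ∨ U ⊓ B ≠ ⊥] := by
  tfae_have 1 → 2 := by
    intro h1 a ha ha0 b hb hb0 hab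
    exact h1 ⟨Submodule.span R {a}, Submodule.span R {b},
      Submodule.span_le.2 (Set.singleton_subset_iff.2 ha),
      Submodule.span_le.2 (Set.singleton_subset_iff.2 hb),
      by simpa [Submodule.span_singleton_eq_bot] using ha0,
      by simpa [Submodule.span_singleton_eq_bot] using hb0,
      span_equiv_of_ann_eq a b hab⟩
  tfae_have 2 → 3 := by
    intro h2
    constructor
    · by_contra hAB
      obtain ⟨x, hx, hx0⟩ := Submodule.exists_mem_ne_zero_of_ne_bot hAB
      rw [Submodule.mem_inf] at hx
      exact h2 x hx.1 hx0 x hx.2 hx0 rfl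
    · intro U hU hU0
      by_contra hc
      push_neg at hc
      obtain ⟨hUA, hUB⟩ := hc
      have hbA : ∀ x, x ∈ U → x ∈ A → x = 0 := fun x h1 h2 =>
        (Submodule.eq_bot_iff _).1 hUA x (Submodule.mem_inf.2 ⟨h1, h2⟩)
      have hbB : ∀ x, x ∈ U → x ∈ B → x = 0 := fun x h1 h2 =>
        (Submodule.eq_bot_iff _).1 hUB x (Submodule.mem_inf.2 ⟨h1, h2⟩)
      obtain ⟨u, hu, hu0⟩ := Submodule.exists_mem_ne_zero_of_ne_bot hU0
      obtain ⟨a, ha, b, hb, hab⟩ := Submodule.mem_sup.1 (hU hu)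
      have ha0 : a ≠ 0 := by
        rintro rfl
        exact hu0 (hbB u hu (by rw [← hab, zero_add]; exact hb))
      have hb0 : b ≠ 0 := by
        rintro rfl
        exact hu0 (hbA u hu (by rw [← hab, add_zero]; exact ha))
      refine h2 a ha ha0 b hb hb0 ?_
      ext r
      simp only [Set.mem_setOf_eq]
      constructor
      · intro hra
        have h1 : r • u = r • b := by rw [← hab, smul_add, hra, zero_add]
        have h2' : r • u = 0 := hbB _ (Submodule.smul_mem U r hu)
          (h1 ▸ Submodule.smul_mem B r hb)
        rw [h1] at h2'; exact h2'
      · intro hrb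
        have h1 : r • u = r • a := by rw [← hab, smul_add, hrb, add_zero]
        have h2' : r • u = 0 := hbA _ (Submodule.smul_mem U r hu)
          (h1 ▸ Submodule.smul_mem A r ha)
        rw [h1] at h2'; exact h2'
  tfae_have 3 → 1 := by
    rintro ⟨hAB, h3⟩ ⟨X, Y, hXA, hYB, hX0, hY0, ⟨f⟩⟩
    have hbot : ∀ x : M, x ∈ A → x ∈ B → x = 0 := fun x h1 h2 =>
      (Submodule.eq_bot_iff _).1 hAB x (Submodule.mem_inf.2 ⟨h1, h2⟩)
    set g : X →ₗ[R] M := X.subtype + Y.subtype.comp f.toLinearMap with hg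
    have hgx : ∀ x : X, g x = (x : M) + (f x : M) := fun x => rfl
    set U := LinearMap.range g with hUdef
    have hUle : U ≤ A ⊔ B := by
      rintro _ ⟨x, rfl⟩
      rw [hgx]
      exact Submodule.add_mem _ (Submodule.mem_sup_left (hXA x.2))
        (Submodule.mem_sup_right (hYB (f x).2))
    have hU0 : U ≠ ⊥ := by
      obtain ⟨x, hx, hx0⟩ := Submodule.exists_mem_ne_zero_of_ne_bot hX0
      rw [Submodule.ne_bot_iff]
      refine ⟨g ⟨x, hx⟩, ⟨_, rfl⟩, fun h0 => ?_⟩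
      rw [hgx] at h0
      have hxB : x ∈ B := by
        have hx' : (x : M) = -(f ⟨x, hx⟩ : M) := eq_neg_of_add_eq_zero_left h0
        rw [hx']
        exact Submodule.neg_mem B (hYB (f ⟨x, hx⟩).2)
      exact hx0 (hbot x (hXA hx) hxB)
    rcases h3 U hUle hU0 with h | h
    · obtain ⟨u, hu, hu0⟩ := Submodule.exists_mem_ne_zero_of_ne_bot h
      rw [Submodule.mem_inf] at hu
      obtain ⟨⟨x, rfl⟩, huA⟩ := hu
      have hfxA : (f x : M) ∈ A := by
        have he : (f x : M) = g x - (x : M) := by rw [hgx]; abel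
        rw [he]; exact Submodule.sub_mem A huA (hXA x.2)
      have hfz : f x = 0 := Subtype.ext (by simpa using hbot _ hfxA (hYB (f x).2))
      have hx0 : x = 0 := f.injective (by simpa using hfz)
      exact hu0 (by rw [hgx, hx0]; simp)
    · obtain ⟨u, hu, hu0⟩ := Submodule.exists_mem_ne_zero_of_ne_bot h
      rw [Submodule.mem_inf] at hu
      obtain ⟨⟨x, rfl⟩, huB⟩ := hu
      have hxB : (x : M) ∈ B := by
        have he : (x : M) = g x - (f x : M) := by rw [hgx]; abel
        rw [he]; exact Submodule.sub_mem B huB (hYB (f x).2)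
      have hx0 : x = 0 := Subtype.ext (by simpa using hbot _ (hXA x.2) hxB)
      exact hu0 (by rw [hgx, hx0]; simp)
  tfae_finish
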